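/- Let α be a real number that is transcendental over ℚ. Then there exists a subfield K of ℝ such that α ∉ K, the cardinality of K equals the cardinality of the continuum 𝔠, every nonnegative element of K has a square root in K, and every polynomial with coefficients in K of odd degree has a root in K. In particular, K is a proper real closed Archimedean subfield of ℝ of cardinality 𝔠. -/

import Mathlib

set_option maxHeartbeats 2000000
set_option synthInstance.maxHeartbeats 1000000

open Polynomial

open Set Filter Cardinal in
/-- An odd-degree real polynomial with positive leading coefficient has a real root. -/
theorem odd_root_pos_aux (q : ℝ[X]) (h1 : Odd q.natDegree) (h2 : 0 < q.leadingCoeff) :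
    ∃ y : ℝ, q.IsRoot y := by
  have hnd : q.natDegree ≠ 0 := by rintro h; rw [h] at h1; simp at h1
  have hdeg : 0 < q.degree := natDegree_pos_iff_degree_pos.mp (Nat.pos_of_ne_zero hnd)
  have ht : Tendsto (fun x => eval x q) atTop atTop :=
    q.tendsto_atTop_of_leadingCoeff_nonneg hdeg h2.le
  set r := q.comp (-X) with hr
  have hrev : ∀ x : ℝ, eval x r = eval (-x) q := by
    intro x; simp [hr, eval_comp]
  have hndr : r.natDegree = q.natDegree := by
    rw [hr, natDegree_comp]; simp
  have hlcr : r.leadingCoeff = -q.leadingCoeff := by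
    rw [hr, leadingCoeff_comp (by simp : (-X : ℝ[X]).natDegree ≠ 0)]
    simp [h1.neg_one_pow]
  have hdegr : 0 < r.degree := by
    rw [← natDegree_pos_iff_degree_pos, hndr]; exact Nat.pos_of_ne_zero hnd
  have htr : Tendsto (fun x => eval x r) atTop atBot :=
    r.tendsto_atBot_of_leadingCoeff_nonpos hdegr (by rw [hlcr]; linarith)
  have hb : Tendsto (fun x => eval x q) atBot atBot := by
    have := htr.comp tendsto_neg_atBot_atTop
    refine this.congr fun x => ?_
    simp [Function.comp, hrev]
  obtain ⟨a, ha⟩ := (hb.eventually (eventually_le_atBot (0:ℝ))).exists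
  obtain ⟨b, hbb⟩ := (ht.eventually (eventually_ge_atTop (0:ℝ))).exists
  obtain ⟨y, hy⟩ := intermediate_value_univ a b q.continuous ⟨ha, hbb⟩
  exact ⟨y, hy⟩

/-- An odd-degree real polynomial has a real root. -/
theorem odd_root_aux (q : ℝ[X]) (h1 : Odd q.natDegree) : ∃ y : ℝ, q.IsRoot y := by
  have hq : q ≠ 0 := by rintro rfl; simp at h1
  rcases lt_or_gt_of_ne (leadingCoeff_ne_zero.mpr hq) with h | h
  · obtain ⟨y, hy⟩ := odd_root_pos_aux (-q) (by simpa using h1) (by simpa using h)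
    exact ⟨y, by simpa using hy⟩
  · exact odd_root_pos_aux q h1 h

open Set Cardinal in
/-- For every real number `α` transcendental over `ℚ` there exists a subfield `K` of `ℝ`
with `α ∉ K`, of cardinality the continuum, in which every nonnegative element has a square
root and every odd-degree polynomial has a root; i.e. a proper real closed Archimedean
subfield of `ℝ` of cardinality `𝔠` avoiding `α`. -/
theorem exists_realClosed_subfield_avoiding (α : ℝ) (hα : Transcendental ℚ α) :
    ∃ K : Subfield ℝ, α ∉ K ∧ Cardinal.mk ↥K = Cardinal.continuum ∧
      (∀ x : ↥K, 0 ≤ x → ∃ y : ↥K, y ^ 2 = x) ∧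
      (∀ p : Polynomial ↥K, Odd p.natDegree → ∃ x : ↥K, p.IsRoot x) := by
  classical
  -- Step 1: extend `{α}` to a transcendence basis `B` of `ℝ` over `ℚ`.
  have hind : AlgebraicIndependent ℚ ((↑) : ({α} : Set ℝ) → ℝ) := by
    have h1 := (algebraicIndependent_iff_transcendental (R := ℚ)).2 hα
    exact h1.to_subtype_range' (by simp)
  obtain ⟨B, hBsub, hBmax⟩ :=
    exists_maximal_algebraicIndependent ({α} : Set ℝ) Set.univ (subset_univ _) hind
  have hB : IsTranscendenceBasis ℚ ((↑) : B → ℝ) := by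
    refine ⟨hBmax.1.1, fun s hs hBs => ?_⟩
    simp only [Subtype.range_coe_subtype, setOf_mem_eq] at *
    exact hBmax.eq_of_le ⟨hs, subset_univ _⟩ hBs
  have hαB : α ∈ B := hBsub rfl
  set S : Set ℝ := B \ {α} with hSdef
  have hS : AlgebraicIndependent ℚ ((↑) : S → ℝ) := hBmax.1.1.mono diff_subset
  -- Step 2: `α` is transcendental over the subalgebra generated by `S`.
  have hTrans0 : Transcendental (Algebra.adjoin ℚ S) α := by
    have hg : ∀ o : Option S, (Option.elim o α ((↑) : S → ℝ)) ∈ B := by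
      rintro (_ | ⟨s, hs⟩)
      · exact hαB
      · exact hs.1
    let g : Option S → B := fun o => ⟨Option.elim o α ((↑) : S → ℝ), hg o⟩
    have ginj : Function.Injective g := by
      rintro (_ | ⟨s, hs⟩) (_ | ⟨t, ht⟩) h
      · rfl
      · exact absurd (congrArg Subtype.val h).symm ht.2
      · exact absurd (congrArg Subtype.val h) hs.2
      · exact congrArg some (Subtype.ext (congrArg Subtype.val h : _))
    have hOpt : AlgebraicIndependent ℚ (fun o : Option S => Option.elim o α ((↑) : S → ℝ)) := by
      have h2 := hBmax.1.1.comp g ginj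
      convert h2 using 1
      funext o; cases o <;> rfl
    have := (hS.option_iff_transcendental α).1 hOpt
    rwa [Subtype.range_coe] at this
  -- Step 3: `α` is transcendental over the intermediate field generated by `S`.
  set A0 : Subalgebra ℚ ℝ := Algebra.adjoin ℚ S with hA0
  set L : IntermediateField ℚ ℝ := IntermediateField.adjoin ℚ S with hL
  letI : Algebra A0 L :=
    (Subalgebra.inclusion (IntermediateField.algebra_adjoin_le_adjoin ℚ S)).toRingHom.toAlgebra
  haveI : IsScalarTower A0 L ℝ := IsScalarTower.of_algebraMap_eq (fun x => rfl)
  haveI : IsFractionRing A0 L := by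
    refine ⟨⟨?map_units', ?surj', ?exists_of_eq⟩⟩
    case map_units' =>
      rintro ⟨y, hy⟩
      have hy0 : (y : ↥A0) ≠ 0 := nonZeroDivisors.coe_ne_zero ⟨y, hy⟩
      refine isUnit_iff_ne_zero.mpr fun h => hy0 ?_
      have : (y : ℝ) = 0 := congrArg Subtype.val h
      exact Subtype.ext this
    case surj' =>
      intro z
      obtain ⟨r, s, hz⟩ := (IntermediateField.mem_adjoin_iff ℚ (z : ℝ)).1 z.2
      have hmem : ∀ t : MvPolynomial S ℚ, MvPolynomial.aeval (Subtype.val : S → ℝ) t ∈ A0 := by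
        intro t
        have : A0 = Algebra.adjoin ℚ (Set.range (Subtype.val : S → ℝ)) := by
          rw [hA0, Subtype.range_coe]
        rw [this, Algebra.adjoin_range_eq_range_aeval]
        exact ⟨t, rfl⟩
      by_cases hs : MvPolynomial.aeval (Subtype.val : S → ℝ) s = 0
      · refine ⟨⟨0, 1⟩, ?_⟩
        have : (z : ℝ) = 0 := by rw [hz, hs, div_zero]
        have hz0 : z = 0 := Subtype.ext this
        simp [hz0]
      · refine ⟨⟨⟨_, hmem r⟩, ⟨⟨_, hmem s⟩, mem_nonZeroDivisors_of_ne_zero fun h => hs ?_⟩⟩, ?_⟩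
        · exact congrArg Subtype.val h
        · apply Subtype.ext
          show (z : ℝ) * MvPolynomial.aeval (Subtype.val : S → ℝ) s
              = MvPolynomial.aeval (Subtype.val : S → ℝ) r
          rw [hz, div_mul_cancel₀ _ hs]
    case exists_of_eq =>
      intro a b h
      have h2 : (a : ℝ) = (b : ℝ) := congrArg (Subtype.val : ↥L → ℝ) h
      exact ⟨1, by rw [Subtype.ext h2]⟩
  have hTransL : Transcendental (↥L) α := fun h =>
    hTrans0 ((IsFractionRing.isAlgebraic_iff A0 L ℝ).mpr h)
  -- Step 4: take the relative algebraic closure of `L` in `ℝ`.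
  set K'' : IntermediateField (↥L) ℝ := algebraicClosure (↥L) ℝ with hK''
  set K : Subfield ℝ := K''.toSubfield with hKdef
  have hmemK : ∀ x : ℝ, x ∈ K ↔ x ∈ K'' := fun x => Iff.rfl
  have hαK : α ∉ K := fun h => hTransL (mem_algebraicClosure_iff.1 ((hmemK α).1 h))
  have hclosed : ∀ y : ℝ, IsIntegral (↥K'') y → y ∈ K := by
    intro y hy
    exact (hmemK y).2 (mem_algebraicClosure_iff'.2 (isIntegral_trans y hy))
  -- square roots
  have hsqrt : ∀ x : ↥K, 0 ≤ x → ∃ y : ↥K, y ^ 2 = x := by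
    intro x hx
    have hx' : (0:ℝ) ≤ (x : ℝ) := hx
    set y : ℝ := Real.sqrt x with hy
    have hy2 : y ^ 2 = (x : ℝ) := Real.sq_sqrt hx'
    have hyK : y ∈ K := by
      refine hclosed y ⟨X ^ 2 - C (⟨(x : ℝ), (hmemK _).1 x.2⟩ : ↥K''), ?_, ?_⟩
      · exact monic_X_pow_sub_C _ (by norm_num)
      · simp only [eval₂_sub, eval₂_pow, eval₂_X, eval₂_C]
        have : (algebraMap (↥K'') ℝ) (⟨(x : ℝ), (hmemK _).1 x.2⟩ : ↥K'') = (x : ℝ) := rfl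
        rw [this, hy2]; ring
    exact ⟨⟨y, hyK⟩, Subtype.ext hy2⟩
  -- roots of odd-degree polynomials
  have hodd : ∀ p : Polynomial (↥K), Odd p.natDegree → ∃ x : ↥K, p.IsRoot x := by
    intro p hp
    set f : ↥K →+* ℝ := K.subtype with hf
    have hfinj : Function.Injective f := Subtype.val_injective
    set q : ℝ[X] := p.map f with hq
    have hdq : q.natDegree = p.natDegree := natDegree_map_eq_of_injective hfinj p
    obtain ⟨y, hy⟩ := odd_root_aux q (hdq ▸ hp)
    have hp0 : p ≠ 0 := by rintro rfl; simp at hp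
    let φ : ↥K →+* ↥K'' :=
      { toFun := fun x => ⟨x.1, (hmemK _).1 x.2⟩
        map_one' := rfl
        map_mul' := fun _ _ => rfl
        map_zero' := rfl
        map_add' := fun _ _ => rfl }
    have hφinj : Function.Injective φ := by
      intro a b h
      exact Subtype.ext (congrArg Subtype.val h : _)
    have halg : IsAlgebraic (↥K'') y := by
      refine ⟨p.map φ, ?_, ?_⟩
      · exact (Polynomial.map_ne_zero_iff hφinj).2 hp0
      · rw [aeval_def, eval₂_map]
        have hcomp : (algebraMap (↥K'') ℝ).comp (φ : ↥K →+* ↥K'') = f := by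
          ext z; rfl
        rw [hcomp, ← eval_map]
        exact hy
    have hyK : y ∈ K := hclosed y halg.isIntegral
    refine ⟨⟨y, hyK⟩, ?_⟩
    have : f (p.eval ⟨y, hyK⟩) = 0 := by
      rw [← eval₂_at_apply]
      show eval₂ f y p = 0
      rw [← eval_map]; exact hy
    exact hfinj (by simpa using this)
  -- Step 5: cardinality
  have hSK : ∀ x ∈ S, x ∈ K := by
    intro x hx
    have hxL : x ∈ L := IntermediateField.subset_adjoin ℚ S hx
    exact (hmemK x).2 (K''.algebraMap_mem ⟨x, hxL⟩)
  have hcard : Cardinal.mk ↥K = Cardinal.continuum := by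
    haveI : Nonempty ↥B := ⟨⟨α, hαB⟩⟩
    have hcardB : #↥B = 𝔠 := by
      have h := hB.lift_cardinalMk_eq_max_lift
      simp only [Cardinal.lift_id, Cardinal.mk_real] at h
      rw [Cardinal.mk_denumerable ℚ] at h
      refine le_antisymm ((Cardinal.mk_le_of_injective Subtype.val_injective).trans_eq
        Cardinal.mk_real) ?_
      rcases le_or_gt 𝔠 (#↥B) with h' | h'
      · exact h'
      · exfalso
        have : (𝔠 : Cardinal) < 𝔠 := by
          calc 𝔠 = ℵ₀ ⊔ #↥B ⊔ ℵ₀ := h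
          _ < 𝔠 := max_lt (max_lt aleph0_lt_continuum h') aleph0_lt_continuum
        exact lt_irrefl _ this
    have hcardS : 𝔠 ≤ #↥S := by
      by_contra h'
      push_neg at h'
      have hBS : B ⊆ S ∪ {α} := by
        intro x hx
        by_cases hxa : x = α
        · exact Or.inr (by simp [hxa])
        · exact Or.inl ⟨hx, hxa⟩
      have h1 : #↥B ≤ #↥S + #({α} : Set ℝ) :=
        (Cardinal.mk_le_mk_of_subset hBS).trans (Cardinal.mk_union_le _ _)
      rw [hcardB, Cardinal.mk_singleton] at h1
      have h2 : #↥S + 1 < 𝔠 :=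
        Cardinal.add_lt_of_lt aleph0_le_continuum h' (one_lt_aleph0.trans_le aleph0_le_continuum)
      exact absurd h1 (not_le.2 h2)
    refine le_antisymm ((Cardinal.mk_le_of_injective Subtype.val_injective).trans_eq
        Cardinal.mk_real) ?_
    refine hcardS.trans
      (Cardinal.mk_le_of_injective (f := fun s : ↥S => (⟨s.1, hSK s.1 s.2⟩ : ↥K)) ?_)
    intro a b h
    exact Subtype.ext (congrArg Subtype.val h : _)
  exact ⟨K, hαK, hcard, hsqrt, hodd⟩
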